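/- Let f be convex and C² satisfying for all x, h: f(x+h) − f(x) ≤ ⟨∇f(x), h⟩ + (1/2)‖h‖_x² + (L/6)‖h‖_x³, with positive definite Hessians. Let x⁺ = x − α∇²f(x)⁻¹∇f(x) with α = (−1+√(1+2G))/G, G = L·g, g = ‖∇f(x)‖*_x > 0. Then f(x⁺) − f(x) ≤ −(α g²)·(1 − α/2 − (G/6)α²) ≤ −(1/2)·g²/max(√G, 2). In particular, if g ≥ 4/L then f(x⁺) − f(x) ≤ −g^{3/2}/(2√L), and if g ≤ 4/L then f(x⁺) − f(x) ≤ −g²/4. -/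

import Mathlib

open RealInnerProductSpace

set_option maxHeartbeats 1000000 in
theorem aicn_one_step_decrease {d : ℕ}
    (f : EuclideanSpace ℝ (Fin d) → ℝ)
    (hess hessinv : EuclideanSpace ℝ (Fin d) →
      EuclideanSpace ℝ (Fin d) →L[ℝ] EuclideanSpace ℝ (Fin d))
    (L : ℝ) (hL : 0 < L)
    (hconv : ConvexOn ℝ Set.univ f)
    (hf : ContDiff ℝ 2 f)
    (hhess : ∀ x, HasFDerivAt (gradient f) (hess x) x)
    (hpd : ∀ x v, v ≠ 0 → 0 < ⟪hess x v, v⟫)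
    (hinv : ∀ x, (hess x).comp (hessinv x) = ContinuousLinearMap.id ℝ _ ∧
      (hessinv x).comp (hess x) = ContinuousLinearMap.id ℝ _)
    -- cubic upper bound in local Hessian norms
    (hub : ∀ x h, f (x + h) - f x ≤ ⟪gradient f x, h⟫ + 1 / 2 * ⟪hess x h, h⟫ +
      L / 6 * Real.sqrt ⟪hess x h, h⟫ ^ 3)
    (x xplus : EuclideanSpace ℝ (Fin d)) (g G α : ℝ)
    (hg : g = Real.sqrt ⟪gradient f x, hessinv x (gradient f x)⟫)
    (hgpos : 0 < g)
    (hG : G = L * g)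
    (hα : α = (-1 + Real.sqrt (1 + 2 * G)) / G)
    (hxplus : xplus = x - α • hessinv x (gradient f x)) :
    f xplus - f x ≤ -(α * g ^ 2) * (1 - α / 2 - G / 6 * α ^ 2) ∧
      f xplus - f x ≤ -(1 / 2) * (g ^ 2 / max (Real.sqrt G) 2) ∧
      (g ≥ 4 / L → f xplus - f x ≤ -(g ^ ((3 : ℝ) / 2) / (2 * Real.sqrt L))) ∧
      (g ≤ 4 / L → f xplus - f x ≤ -(g ^ 2 / 4)) := by
  have hGpos : 0 < G := by rw [hG]; positivity
  set v := hessinv x (gradient f x) with hv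
  have hvg : hess x v = gradient f x := by
    have h1 := ContinuousLinearMap.ext_iff.mp (hinv x).1 (gradient f x)
    simpa using h1
  have hinnn : 0 ≤ ⟪gradient f x, v⟫ := by
    rw [← hvg]
    rcases eq_or_ne v 0 with h0 | h0
    · simp [h0]
    · exact (hpd x v h0).le
  have hg2 : ⟪gradient f x, v⟫ = g ^ 2 := by rw [hg, Real.sq_sqrt hinnn]
  -- facts about α
  have hs1 : Real.sqrt (1 + 2 * G) ^ 2 = 1 + 2 * G := Real.sq_sqrt (by linarith)
  have hsgt : 1 < Real.sqrt (1 + 2 * G) := by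
    nlinarith [Real.sqrt_nonneg (1 + 2 * G)]
  have hα0 : 0 < α := by
    rw [hα]; exact div_pos (by linarith) hGpos
  have hkey : G * α ^ 2 / 2 + α = 1 := by
    rw [hα]
    field_simp
    nlinarith [hs1, Real.sq_sqrt (show (0:ℝ) ≤ 1 + G * 2 by linarith)]
  have hα1 : α ≤ 1 := by nlinarith [hkey, sq_nonneg α]
  -- apply the cubic upper bound
  have hmain := hub x ((-α) • v)
  have e1 : ⟪gradient f x, (-α) • v⟫ = -α * g ^ 2 := by
    rw [real_inner_smul_right, hg2]
  have e2 : ⟪hess x ((-α) • v), (-α) • v⟫ = α ^ 2 * g ^ 2 := by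
    rw [map_smul, real_inner_smul_left, real_inner_smul_right, hvg, hg2]; ring
  have e3 : Real.sqrt (α ^ 2 * g ^ 2) = α * g := by
    rw [show α ^ 2 * g ^ 2 = (α * g) ^ 2 by ring, Real.sqrt_sq (by positivity)]
  have hx' : x + (-α) • v = xplus := by
    rw [hxplus, neg_smul, ← sub_eq_add_neg]
  rw [hx', e1, e2, e3] at hmain
  have first : f xplus - f x ≤ -(α * g ^ 2) * (1 - α / 2 - G / 6 * α ^ 2) := by
    refine hmain.trans_eq ?_
    rw [hG]; ring
  refine ⟨first, ?_⟩
  set M := max (Real.sqrt G) 2 with hMdef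
  have hM2 : (2 : ℝ) ≤ M := le_max_right _ _
  have hMpos : 0 < M := by linarith
  have hsqrt4 : Real.sqrt 4 = 2 := by
    rw [show (4 : ℝ) = 2 ^ 2 by norm_num, Real.sqrt_sq (by norm_num)]
  have hMα : 1 ≤ M * α := by
    rcases le_total G 4 with h4 | h4
    · have hsle : Real.sqrt G ≤ 2 := by
        rw [← hsqrt4]; exact Real.sqrt_le_sqrt h4
      have hM : M = 2 := max_eq_right hsle
      have hαhalf : 1 / 2 ≤ α := by nlinarith [hkey, sq_nonneg α, hα0]
      rw [hM]; linarith
    · have hsge : 2 ≤ Real.sqrt G := by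
        rw [← hsqrt4]; exact Real.sqrt_le_sqrt h4
      have hM : M = Real.sqrt G := max_eq_left hsge
      have hαhalf : α ≤ 1 / 2 := by nlinarith [hkey, sq_nonneg α, hα0]
      have hGα2 : 1 ≤ G * α ^ 2 := by linarith
      have hsq : Real.sqrt G ^ 2 = G := Real.sq_sqrt hGpos.le
      have hmp : (Real.sqrt G * α) ^ 2 = G * α ^ 2 := by rw [mul_pow, hsq]
      rw [hM]
      nlinarith [hmp, hGα2, mul_nonneg (Real.sqrt_nonneg G) hα0.le]
  have hrewrite : -(α * g ^ 2) * (1 - α / 2 - G / 6 * α ^ 2)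
      = -(g ^ 2) * (α * (4 - α) / 6) := by
    linear_combination (α * g ^ 2 / 3) * hkey
  have hfrac : 1 / (2 * M) ≤ α * (4 - α) / 6 := by
    rw [div_le_div_iff₀ (by positivity) (by norm_num)]
    nlinarith [mul_nonneg (by linarith : (0:ℝ) ≤ M * α - 1) (by linarith : (0:ℝ) ≤ 4 - α)]
  have second : f xplus - f x ≤ -(1 / 2) * (g ^ 2 / M) := by
    refine first.trans ?_
    rw [hrewrite]
    have h := mul_le_mul_of_nonneg_left hfrac (sq_nonneg g)
    have heq : (1 / 2) * (g ^ 2 / M) = g ^ 2 * (1 / (2 * M)) := by ring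
    nlinarith [h]
  refine ⟨second, ?_, ?_⟩
  · intro hgL
    have hG4 : 4 ≤ G := by
      rw [ge_iff_le, div_le_iff₀ hL] at hgL
      rw [hG]; linarith
    have hsge : 2 ≤ Real.sqrt G := by
      rw [← hsqrt4]; exact Real.sqrt_le_sqrt hG4
    have hM : M = Real.sqrt G := max_eq_left hsge
    have hsg : Real.sqrt G = Real.sqrt L * Real.sqrt g := by
      rw [hG, Real.sqrt_mul hL.le]
    have hrg : g ^ ((3 : ℝ) / 2) * Real.sqrt g = g ^ 2 := by
      rw [Real.sqrt_eq_rpow, ← Real.rpow_add hgpos]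
      norm_num
    have hLpos : 0 < Real.sqrt L := Real.sqrt_pos.mpr hL
    have hgp : 0 < Real.sqrt g := Real.sqrt_pos.mpr hgpos
    refine second.trans_eq ?_
    rw [hM, hsg]
    have e : g ^ 2 / (Real.sqrt L * Real.sqrt g) = g ^ ((3:ℝ)/2) / Real.sqrt L := by
      rw [div_eq_div_iff (by positivity : (0:ℝ) < Real.sqrt L * Real.sqrt g).ne'
        hLpos.ne']
      first
      | linear_combination (Real.sqrt L) * hrg
      | linear_combination (-Real.sqrt L) * hrg
    rw [e]; ring
  · intro hgL
    have hG4 : G ≤ 4 := by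
      rw [hG]
      calc L * g ≤ L * (4 / L) := by nlinarith
      _ = 4 := by field_simp
    have hsle : Real.sqrt G ≤ 2 := by
      rw [← hsqrt4]; exact Real.sqrt_le_sqrt hG4
    have hM : M = 2 := max_eq_right hsle
    refine second.trans_eq ?_
    rw [hM]; ring
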